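/- A frequency vector x ∈ ℕ^p is an indispensable monomial if and only if x is a minimal multi-element, i.e., |F_{Ax}| ≥ 2 and |F_{A(x−e_i)}| = 1 for every i ∈ supp(x). -/

import Mathlib

open scoped BigOperators

section Defs

variable {ι κ : Type*} [Fintype ι]

/-- Embed a frequency vector `x ∈ ℕ^ι` into `ℤ^ι`. -/
def natToInt (x : ι → ℕ) : ι → ℤ := fun i => (x i : ℤ)

/-- The fiber of `t`: all frequency vectors `x` with `A x = t`. -/
def fiberOf (A : Matrix κ ι ℤ) (t : κ → ℤ) : Set (ι → ℕ) :=
  {x | A.mulVec (natToInt x) = t}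

/-- A move for `A`: an integer vector in the kernel of `A`. -/
def IsMove (A : Matrix κ ι ℤ) (z : ι → ℤ) : Prop := A.mulVec z = 0

/-- The positive part `z⁺` of an integer vector, as a frequency vector. -/
def posOf (z : ι → ℤ) : ι → ℕ := fun i => (z i).toNat

/-- The negative part `z⁻` of an integer vector, as a frequency vector. -/
def negOf (z : ι → ℤ) : ι → ℕ := fun i => (-z i).toNat

/-- The degree of a move: `deg z = |z⁺|`. -/
def degOf (z : ι → ℤ) : ℕ := ∑ i, posOf z i

/-- One step: add or subtract one move of `B`, staying in `ℕ^ι`. -/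
def MStep (B : Set (ι → ℤ)) (x y : ι → ℕ) : Prop :=
  ∃ z ∈ B, natToInt y = natToInt x + z ∨ natToInt y = natToInt x - z

/-- `y` is accessible from `x` by the moves of `B` (staying nonnegative throughout,
since all intermediate points are frequency vectors). -/
def Accessible (B : Set (ι → ℤ)) : (ι → ℕ) → (ι → ℕ) → Prop :=
  Relation.ReflTransGen (MStep B)

/-- A Markov basis: a finite set of moves such that every fiber forms a single
equivalence class for mutual accessibility. -/
def IsMarkovBasis (A : Matrix κ ι ℤ) (B : Set (ι → ℤ)) : Prop :=
  B.Finite ∧ (∀ z ∈ B, IsMove A z) ∧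
    ∀ t : κ → ℤ, ∀ x ∈ fiberOf A t, ∀ y ∈ fiberOf A t, Accessible B x y

/-- A minimal Markov basis: no proper subset is a Markov basis. -/
def IsMinimalMarkovBasis (A : Matrix κ ι ℤ) (B : Set (ι → ℤ)) : Prop :=
  IsMarkovBasis A B ∧ ∀ B' ⊂ B, ¬ IsMarkovBasis A B'

/-- An indispensable monomial: every Markov basis contains a move whose
positive or negative part is `x`. -/
def IsIndispensableMonomial (A : Matrix κ ι ℤ) (x : ι → ℕ) : Prop :=
  ∀ B : Set (ι → ℤ), IsMarkovBasis A B → ∃ z ∈ B, posOf z = x ∨ negOf z = x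

/-- `B_n`: the set of moves of degree at most `n`. -/
def Bmoves (A : Matrix κ ι ℤ) (n : ℕ) : Set (ι → ℤ) :=
  {z | IsMove A z ∧ degOf z ≤ n}

/-- The sample size `|t|` of a sufficient statistic `t` (well defined on nonempty
fibers under homogeneity). -/
noncomputable def sampleSize (A : Matrix κ ι ℤ) (t : κ → ℤ) : ℕ :=
  sInf {n | ∃ x ∈ fiberOf A t, ∑ i, x i = n}

/-- The `B_{|t|-1}`-equivalence classes of the fiber of `t`. -/
noncomputable def fiberClasses (A : Matrix κ ι ℤ) (t : κ → ℤ) : Set (Set (ι → ℕ)) :=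
  {C | ∃ x ∈ fiberOf A t,
    C = {y | y ∈ fiberOf A t ∧ Accessible (Bmoves A (sampleSize A t - 1)) x y}}

/-- Homogeneity: some rational vector `w` has `w ⬝ aᵢ = 1` for every column `aᵢ`. -/
def IsHomogeneousMatrix [Fintype κ] (A : Matrix κ ι ℤ) : Prop :=
  ∃ w : κ → ℚ, ∀ i : ι, ∑ j, w j * (A j i : ℚ) = 1

end Defs

/-- `x` is a minimal multi-element: its fiber has at least two elements, while
removing any unit from its support yields a one-element fiber. -/
def IsMinimalMultiElement {p d : ℕ} (A : Matrix (Fin d) (Fin p) ℤ) (x : Fin p → ℕ) : Prop :=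
  2 ≤ (fiberOf A (A.mulVec (natToInt x))).encard ∧
    ∀ i : Fin p, 0 < x i →
      (fiberOf A (A.mulVec (natToInt (x - Pi.single i 1)))).encard = 1

set_option linter.unusedSectionVars false
section Aux
variable {ι κ : Type*} [Fintype ι]

lemma natToInt_inj : Function.Injective (natToInt (ι := ι)) := by
  intro a b h
  funext i
  have := congrFun h i
  simpa [natToInt] using this

lemma natAbs_eq_pos_add_neg (a : ℤ) : a.natAbs = a.toNat + (-a).toNat := by omega

lemma natToInt_posOf_sub_negOf (z : ι → ℤ) :
    natToInt (posOf z) - natToInt (negOf z) = z := by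
  funext j
  simp only [Pi.sub_apply, natToInt, posOf, negOf]
  omega

lemma mulVec_natToInt_sub (A : Matrix κ ι ℤ) (z : ι → ℤ) :
    A.mulVec z = A.mulVec (natToInt (posOf z)) - A.mulVec (natToInt (negOf z)) := by
  rw [← Matrix.mulVec_sub, natToInt_posOf_sub_negOf]

/-- Disjoint supports of positive and negative part. -/
lemma posOf_negOf_disj (z : ι → ℤ) (i : ι) : posOf z i = 0 ∨ negOf z i = 0 := by
  simp only [posOf, negOf]; omega

end Aux

section Hom
variable {ι κ : Type*} [Fintype ι] [Fintype κ]

lemma weight_sum {A : Matrix κ ι ℤ} {w : κ → ℚ} (hw : ∀ i : ι, ∑ j, w j * (A j i : ℚ) = 1)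
    (z : ι → ℤ) : ∑ j, w j * ((A.mulVec z) j : ℚ) = ∑ i, (z i : ℚ) := by
  calc ∑ j, w j * ((A.mulVec z) j : ℚ)
      = ∑ j, ∑ i, w j * (A j i : ℚ) * (z i : ℚ) := by
        refine Finset.sum_congr rfl fun j _ => ?_
        rw [Matrix.mulVec, dotProduct]
        push_cast
        rw [Finset.mul_sum]
        exact Finset.sum_congr rfl fun i _ => by ring
    _ = ∑ i, ∑ j, w j * (A j i : ℚ) * (z i : ℚ) := Finset.sum_comm
    _ = ∑ i, (z i : ℚ) := by
        refine Finset.sum_congr rfl fun i _ => ?_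
        rw [← Finset.sum_mul, hw i, one_mul]

/-- Under homogeneity, two frequency vectors in the same fiber have the same sample size. -/
lemma sum_eq_of_fiber_eq {A : Matrix κ ι ℤ} {w : κ → ℚ}
    (hw : ∀ i : ι, ∑ j, w j * (A j i : ℚ) = 1) {u v : ι → ℕ}
    (h : A.mulVec (natToInt u) = A.mulVec (natToInt v)) : ∑ i, u i = ∑ i, v i := by
  have h1 := weight_sum hw (natToInt u)
  have h2 := weight_sum hw (natToInt v)
  rw [h] at h1
  have : ∑ i, ((u i : ℚ)) = ∑ i, ((v i : ℚ)) := by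
    have e1 : ∑ i, ((u i : ℚ)) = ∑ i, ((natToInt u i : ℚ)) :=
      Finset.sum_congr rfl fun i _ => by simp [natToInt]
    have e2 : ∑ i, ((v i : ℚ)) = ∑ i, ((natToInt v i : ℚ)) :=
      Finset.sum_congr rfl fun i _ => by simp [natToInt]
    rw [e1, e2, ← h1, ← h2]
  exact_mod_cast (by push_cast at this ⊢; exact this : ((∑ i, u i : ℕ) : ℚ) = ((∑ i, v i : ℕ) : ℚ))

end Hom

section Graver
variable {ι κ : Type*} [Fintype ι]

/-- Conformal order on moves. -/
def Conf (g z : ι → ℤ) : Prop := (∀ i, posOf g i ≤ posOf z i) ∧ (∀ i, negOf g i ≤ negOf z i)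

lemma Conf.refl' (z : ι → ℤ) : Conf z z := ⟨fun _ => le_rfl, fun _ => le_rfl⟩

lemma Conf.trans' {a b c : ι → ℤ} (h1 : Conf a b) (h2 : Conf b c) : Conf a c :=
  ⟨fun i => (h1.1 i).trans (h2.1 i), fun i => (h1.2 i).trans (h2.2 i)⟩

/-- The Graver basis: conformally minimal nonzero moves. -/
def GraverB (A : Matrix κ ι ℤ) : Set (ι → ℤ) :=
  {z | IsMove A z ∧ z ≠ 0 ∧ ∀ h : ι → ℤ, IsMove A h → h ≠ 0 → Conf h z → h = z}

lemma graverB_finite (A : Matrix κ ι ℤ) : (GraverB A).Finite := by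
  classical
  set φ : (ι → ℤ) → ((ι → ℕ) × (ι → ℕ)) := fun z => (posOf z, negOf z) with hφ
  have hinj : Set.InjOn φ (GraverB A) := by
    intro a _ b _ hab
    have h1 : posOf a = posOf b := congrArg Prod.fst hab
    have h2 : negOf a = negOf b := congrArg Prod.snd hab
    have := natToInt_posOf_sub_negOf a
    rw [h1, h2, natToInt_posOf_sub_negOf b] at this
    exact this.symm
  have hanti : IsAntichain (· ≤ ·) (φ '' GraverB A) := by
    rintro _ ⟨a, ha, rfl⟩ _ ⟨b, hb, rfl⟩ hne hle
    have hconf : Conf a b := ⟨fun i => hle.1 i, fun i => hle.2 i⟩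
    have : a = b := hb.2.2 a ha.1 ha.2.1 hconf
    exact hne (congrArg φ this)
  have hN : (Set.univ : Set (ι → ℕ)).IsPWO :=
    Set.isPWO_of_wellQuasiOrderedLE _
  have hpwo : (φ '' GraverB A).IsPWO :=
    Set.IsPWO.mono (hN.prod hN) (by intro y _; simp)
  have hfin : (φ '' GraverB A).Finite := hanti.finite_of_partiallyWellOrderedOn hpwo
  exact Set.Finite.of_finite_image hfin hinj

/-- Every nonzero move conformally dominates a Graver element. -/
lemma exists_graverB_conf (A : Matrix κ ι ℤ) :
    ∀ n : ℕ, ∀ z : ι → ℤ, (∑ i, (z i).natAbs) ≤ n → IsMove A z → z ≠ 0 →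
      ∃ g ∈ GraverB A, Conf g z := by
  intro n
  induction n with
  | zero =>
    intro z hn _ hz0
    exfalso
    apply hz0
    funext i
    have : (z i).natAbs = 0 := by
      have := Finset.sum_eq_zero_iff.mp (Nat.le_zero.mp hn) i (Finset.mem_univ i)
      exact this
    simpa using Int.natAbs_eq_zero.mp this
  | succ n ih =>
    intro z hn hz hz0
    by_cases hmin : ∀ h : ι → ℤ, IsMove A h → h ≠ 0 → Conf h z → h = z
    · exact ⟨z, ⟨hz, hz0, hmin⟩, Conf.refl' z⟩
    · push_neg at hmin
      obtain ⟨h, hmove, hne0, hconf, hne⟩ := hmin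
      have hlt : ∑ i, (h i).natAbs < ∑ i, (z i).natAbs := by
        obtain ⟨i0, hi0⟩ : ∃ i, h i ≠ z i := by
          by_contra hc; push_neg at hc; exact hne (funext hc)
        refine Finset.sum_lt_sum (fun i _ => ?_) ⟨i0, Finset.mem_univ i0, ?_⟩
        · have h1 := hconf.1 i; have h2 := hconf.2 i
          simp only [posOf, negOf] at h1 h2
          omega
        · have h1 := hconf.1 i0; have h2 := hconf.2 i0
          simp only [posOf, negOf] at h1 h2
          omega
      obtain ⟨g, hg, hgconf⟩ := ih h (by omega) hmove hne0
      exact ⟨g, hg, hgconf.trans' hconf⟩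

lemma graverB_connect (A : Matrix κ ι ℤ) :
    ∀ n : ℕ, ∀ x y : ι → ℕ, (∑ i, (natToInt y i - natToInt x i).natAbs) ≤ n →
      A.mulVec (natToInt x) = A.mulVec (natToInt y) → Accessible (GraverB A) x y := by
  intro n
  induction n with
  | zero =>
    intro x y hn _
    have : x = y := by
      apply natToInt_inj; funext i
      have : (natToInt y i - natToInt x i).natAbs = 0 :=
        Finset.sum_eq_zero_iff.mp (Nat.le_zero.mp hn) i (Finset.mem_univ i)
      omega
    rw [this]
    exact Relation.ReflTransGen.refl
  | succ n ih =>
    intro x y hn hA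
    by_cases hxy : x = y
    · rw [hxy]
      exact Relation.ReflTransGen.refl
    · set d : ι → ℤ := natToInt y - natToInt x with hd
      have hdmove : IsMove A d := by
        simp only [IsMove, hd, Matrix.mulVec_sub, hA, sub_self]
      have hd0 : d ≠ 0 := by
        intro hc
        apply hxy
        apply natToInt_inj
        funext i
        have := congrFun hc i
        simp only [hd, Pi.sub_apply, Pi.zero_apply] at this
        omega
      obtain ⟨g, hg, hconf⟩ := exists_graverB_conf A (∑ i, (d i).natAbs) d le_rfl hdmove hd0
      -- x' = x + g
      have hxg : ∀ i, 0 ≤ natToInt x i + g i := by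
        intro i
        have h2 := hconf.2 i
        simp only [negOf, hd, Pi.sub_apply, natToInt] at h2 ⊢
        omega
      set x' : ι → ℕ := fun i => (natToInt x i + g i).toNat with hx'
      have hx'eq : natToInt x' = natToInt x + g := by
        funext i
        have h := hxg i
        simp only [natToInt, hx', Pi.add_apply] at h ⊢
        omega
      have hx'fib : A.mulVec (natToInt x') = A.mulVec (natToInt y) := by
        rw [hx'eq, Matrix.mulVec_add, hg.1, add_zero, hA]
      have hstep : MStep (GraverB A) x x' := ⟨g, hg, Or.inl hx'eq⟩
      have hg0 : ∃ i, g i ≠ 0 := by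
        by_contra hc; push_neg at hc; exact hg.2.1 (funext hc)
      have hdist : (∑ i, (natToInt y i - natToInt x' i).natAbs) ≤ n := by
        have key : ∀ i, (natToInt y i - natToInt x' i).natAbs + (g i).natAbs
            = (d i).natAbs := by
          intro i
          have h1 := hconf.1 i; have h2 := hconf.2 i
          have := congrFun hx'eq i
          simp only [posOf, negOf, hd, Pi.sub_apply, Pi.add_apply] at h1 h2 this ⊢
          omega
        have hsum : (∑ i, (natToInt y i - natToInt x' i).natAbs)
            + (∑ i, (g i).natAbs) = ∑ i, (d i).natAbs := by
          rw [← Finset.sum_add_distrib]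
          exact Finset.sum_congr rfl fun i _ => key i
        have hpos : 0 < ∑ i, (g i).natAbs := by
          obtain ⟨i, hi⟩ := hg0
          exact Finset.sum_pos' (fun _ _ => Nat.zero_le _)
            ⟨i, Finset.mem_univ i, by omega⟩
        have hdd : ∑ i, (natToInt y i - natToInt x i).natAbs = ∑ i, (d i).natAbs :=
          Finset.sum_congr rfl fun i _ => rfl
        omega
      exact Relation.ReflTransGen.head hstep (ih x' y hdist hx'fib)

lemma graverB_isMarkovBasis (A : Matrix κ ι ℤ) : IsMarkovBasis A (GraverB A) := by
  refine ⟨graverB_finite A, fun z hz => hz.1, fun t x hx y hy => ?_⟩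
  exact graverB_connect A _ x y le_rfl (by rw [hx, hy])

end Graver

section MME
variable {p d : ℕ}

lemma natToInt_sub_single {x : Fin p → ℕ} {i : Fin p} (hx : 0 < x i) :
    natToInt (x - Pi.single i 1) = natToInt x - natToInt (Pi.single i 1) := by
  funext j
  rcases eq_or_ne j i with rfl | h
  · simp only [natToInt, Pi.sub_apply, Pi.single_eq_same]; omega
  · simp only [natToInt, Pi.sub_apply, Pi.single_eq_of_ne h]; omega

/-- The key step analysis: a nontrivial move applied at a minimal multi-element `x`
must have its negative part equal to `x`. -/
lemma step_negOf_eq (A : Matrix (Fin d) (Fin p) ℤ) {x : Fin p → ℕ}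
    (hmin : ∀ i : Fin p, 0 < x i →
      (fiberOf A (A.mulVec (natToInt (x - Pi.single i 1)))).encard = 1)
    {z : Fin p → ℤ} (hz : IsMove A z) (hz0 : z ≠ 0) {c : Fin p → ℕ}
    (hc : natToInt c = natToInt x + z) : negOf z = x := by
  by_contra hne
  have hle : ∀ j, negOf z j ≤ x j := by
    intro j
    have := congrFun hc j
    simp only [natToInt, Pi.add_apply, negOf] at this ⊢
    omega
  obtain ⟨i, hi⟩ : ∃ i, negOf z i < x i := by
    by_contra hcon
    push_neg at hcon
    exact hne (funext fun j => le_antisymm (hle j) (hcon j))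
  have hxi : 0 < x i := lt_of_le_of_lt (Nat.zero_le _) hi
  have hci : 0 < c i := by
    have := congrFun hc i
    simp only [natToInt, Pi.add_apply, negOf] at this hi
    omega
  set s := natToInt (Pi.single i (1 : ℕ)) with hs
  set t' := A.mulVec (natToInt (x - Pi.single i 1)) with ht'
  have hu1 : (x - Pi.single i 1) ∈ fiberOf A t' := rfl
  have hu2 : (c - Pi.single i 1) ∈ fiberOf A t' := by
    show A.mulVec (natToInt (c - Pi.single i 1)) = t'
    rw [natToInt_sub_single hci, ht', natToInt_sub_single hxi, hc]
    rw [Matrix.mulVec_sub, Matrix.mulVec_sub, Matrix.mulVec_add, hz, add_zero]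
  have hneq : (x - Pi.single i 1) ≠ (c - Pi.single i 1) := by
    intro hcon
    apply hz0
    have h1 := congrArg natToInt hcon
    rw [natToInt_sub_single hxi, natToInt_sub_single hci, hc] at h1
    funext j
    have := congrFun h1 j
    simp only [Pi.sub_apply, Pi.add_apply] at this
    simpa using (by omega : natToInt x j + z j - natToInt x j = 0)
  have h2 : 1 < (fiberOf A t').encard :=
    Set.one_lt_encard_iff.mpr ⟨_, _, hu1, hu2, hneq⟩
  rw [hmin i hxi] at h2
  exact lt_irrefl _ h2

lemma step_part_or (A : Matrix (Fin d) (Fin p) ℤ) {x : Fin p → ℕ}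
    (hmin : ∀ i : Fin p, 0 < x i →
      (fiberOf A (A.mulVec (natToInt (x - Pi.single i 1)))).encard = 1)
    {z : Fin p → ℤ} (hz : IsMove A z) (hz0 : z ≠ 0) {c : Fin p → ℕ}
    (hc : natToInt c = natToInt x + z ∨ natToInt c = natToInt x - z) :
    posOf z = x ∨ negOf z = x := by
  rcases hc with hc | hc
  · exact Or.inr (step_negOf_eq A hmin hz hz0 hc)
  · left
    have hneg : negOf (-z) = posOf z := by
      funext j; simp only [posOf, negOf, Pi.neg_apply, neg_neg]
    rw [← hneg]
    refine step_negOf_eq A hmin ?_ ?_ (c := c) ?_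
    · show A.mulVec (-z) = 0
      rw [Matrix.mulVec_neg, hz, neg_zero]
    · simpa using hz0
    · rw [hc]; funext j; simp [sub_eq_add_neg]

lemma mme_to_indisp (A : Matrix (Fin d) (Fin p) ℤ) {x : Fin p → ℕ}
    (hx : IsMinimalMultiElement A x) : IsIndispensableMonomial A x := by
  intro B hB
  obtain ⟨hfin, hmoves, hconn⟩ := hB
  have hxmem : x ∈ fiberOf A (A.mulVec (natToInt x)) := rfl
  obtain ⟨y, hy, hyx⟩ : ∃ y ∈ fiberOf A (A.mulVec (natToInt x)), y ≠ x :=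
    Set.exists_ne_of_one_lt_encard (lt_of_lt_of_le (by norm_num : (1:ℕ∞) < 2) hx.1) x
  have key : ∀ v, Accessible B x v → v = x ∨ ∃ z ∈ B, posOf z = x ∨ negOf z = x := by
    intro v hv
    induction hv with
    | refl => exact Or.inl rfl
    | tail hab hbc ih =>
      rcases ih with rfl | hgood
      · obtain ⟨z, hzB, hor⟩ := hbc
        by_cases hz0 : z = 0
        · subst hz0
          left
          apply natToInt_inj
          rcases hor with h | h <;> simpa using h
        · exact Or.inr ⟨z, hzB, step_part_or A hx.2 (hmoves z hzB) hz0 hor⟩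
      · exact Or.inr hgood
  rcases key y (hconn _ x hxmem y hy) with h | h
  · exact absurd h hyx
  · exact h

end MME

section Indisp
variable {p d : ℕ}

lemma eq_of_le_of_sum_le {f g : Fin p → ℕ} (hle : ∀ j, f j ≤ g j)
    (hsum : ∑ j, g j ≤ ∑ j, f j) : f = g := by
  by_contra hne
  obtain ⟨j0, hj0⟩ : ∃ j, f j < g j := by
    by_contra hc; push_neg at hc
    exact hne (funext fun j => le_antisymm (hle j) (hc j))
  have : ∑ j, f j < ∑ j, g j :=
    Finset.sum_lt_sum (fun j _ => hle j) ⟨j0, Finset.mem_univ j0, hj0⟩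
  omega

lemma add_single_eq {x : Fin p → ℕ} {i : Fin p} (hxi : 0 < x i) :
    (x - Pi.single i 1) + Pi.single i 1 = x := by
  funext j
  rcases eq_or_ne j i with rfl | h
  · simp only [Pi.add_apply, Pi.sub_apply, Pi.single_eq_same]; omega
  · simp only [Pi.add_apply, Pi.sub_apply, Pi.single_eq_of_ne h]; omega

lemma sum_sub_single {x : Fin p → ℕ} {i : Fin p} (hxi : 0 < x i) :
    (∑ j, (x - Pi.single i 1 : Fin p → ℕ) j) + 1 = ∑ j, x j := by
  conv_rhs => rw [← add_single_eq hxi]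
  simp only [Pi.add_apply]
  rw [Finset.sum_add_distrib]
  congr 1
  simp [Finset.sum_pi_single']

/-- The indispensability of `x` forces every truncated fiber to be a singleton. -/
lemma indisp_to_mme (A : Matrix (Fin d) (Fin p) ℤ) (hA : IsHomogeneousMatrix A)
    {x : Fin p → ℕ} (hind : IsIndispensableMonomial A x) : IsMinimalMultiElement A x := by
  classical
  obtain ⟨w, hw⟩ := hA
  obtain ⟨z0, hz0G, hor0⟩ := hind (GraverB A) (graverB_isMarkovBasis A)
  have hAparts : ∀ z : Fin p → ℤ, IsMove A z →
      A.mulVec (natToInt (posOf z)) = A.mulVec (natToInt (negOf z)) := by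
    intro z hz
    have := mulVec_natToInt_sub A z
    rw [hz] at this
    linear_combination (norm := abel) -this
  have hne_parts : ∀ z : Fin p → ℤ, z ≠ 0 → posOf z ≠ negOf z := by
    intro z hz hc
    apply hz
    rw [← natToInt_posOf_sub_negOf z, hc, sub_self]
  constructor
  · -- fiber of Ax has ≥ 2 elements
    have hmem : ∀ u v : Fin p → ℕ, u = posOf z0 ∨ u = negOf z0 → (v = x) →
        (posOf z0 = x ∨ negOf z0 = x) → True := fun _ _ _ _ _ => trivial
    set t := A.mulVec (natToInt x) with ht
    have hx : x ∈ fiberOf A t := rfl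
    have hother : ∃ y ∈ fiberOf A t, y ≠ x := by
      rcases hor0 with h | h
      · refine ⟨negOf z0, ?_, ?_⟩
        · show A.mulVec (natToInt (negOf z0)) = t
          rw [← hAparts z0 hz0G.1, h]
        · intro hc; exact hne_parts z0 hz0G.2.1 (h.trans hc.symm)
      · refine ⟨posOf z0, ?_, ?_⟩
        · show A.mulVec (natToInt (posOf z0)) = t
          rw [hAparts z0 hz0G.1, h]
        · intro hc; exact hne_parts z0 hz0G.2.1 (hc.trans h.symm)
    obtain ⟨y, hy, hyx⟩ := hother
    calc (2 : ℕ∞) = ({y, x} : Set (Fin p → ℕ)).encard := (Set.encard_pair hyx).symm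
      _ ≤ (fiberOf A t).encard := Set.encard_mono (by
          intro a ha
          rcases ha with rfl | ha
          · exact hy
          · rw [Set.mem_singleton_iff] at ha; rw [ha]; exact hx)
  · -- truncated fibers are singletons
    intro i hxi
    set m : Fin p → ℕ := x - Pi.single i 1 with hm
    set t' := A.mulVec (natToInt m) with ht'
    have hmmem : m ∈ fiberOf A t' := rfl
    rw [Set.encard_eq_one]
    refine ⟨m, Set.eq_singleton_iff_unique_mem.mpr ⟨hmmem, ?_⟩⟩
    intro y hy
    by_contra hym
    -- now construct a Markov basis avoiding x as a part
    exfalso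
    have hxm : natToInt x = natToInt m + natToInt (Pi.single i 1) := by
      rw [hm, natToInt_sub_single hxi]; ring
    set e : Fin p → ℤ := natToInt (Pi.single i (1:ℕ)) with he
    have hej : ∀ j, e j = if j = i then 1 else 0 := by
      intro j
      rcases eq_or_ne j i with rfl | h
      · simp [he, natToInt]
      · simp [he, natToInt, Pi.single_eq_of_ne h, if_neg h]
    -- sums
    have hSm : (∑ j, m j) + 1 = ∑ j, x j := sum_sub_single hxi
    have hSy : ∑ j, y j = ∑ j, m j := sum_eq_of_fiber_eq hw (by rw [hy, ht'])
    set z1 : Fin p → ℤ := natToInt m - natToInt y with hz1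
    set r : (Fin p → ℤ) → (Fin p → ℕ) := fun z => if posOf z = x then negOf z else posOf z
      with hr
    set Bad : Set (Fin p → ℤ) := {z ∈ GraverB A | posOf z = x ∨ negOf z = x} with hBad
    set repl : (Fin p → ℤ) → (Fin p → ℤ) := fun z => (natToInt y + e) - natToInt (r z)
      with hrepl
    set B' : Set (Fin p → ℤ) := ((GraverB A) \ Bad) ∪ insert z1 (repl '' Bad) with hB'
    -- facts about r
    have hAr : ∀ z ∈ Bad, A.mulVec (natToInt (r z)) = A.mulVec (natToInt x) := by
      rintro z ⟨hzG, hzor⟩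
      by_cases hpos : posOf z = x
      · have hrz : r z = negOf z := by simp only [hr, if_pos hpos]
        rw [hrz, ← hAparts z hzG.1, hpos]
      · have hrz : r z = posOf z := by simp only [hr, if_neg hpos]
        rw [hrz, hAparts z hzG.1]
        rcases hzor with h | h
        · exact absurd h hpos
        · rw [h]
    have hsupp : ∀ z ∈ Bad, ∀ j, 0 < r z j → x j = 0 := by
      rintro z ⟨hzG, hzor⟩ j hj
      by_cases hpos : posOf z = x
      · have hrz : r z = negOf z := by simp only [hr, if_pos hpos]
        rw [hrz] at hj
        rcases posOf_negOf_disj z j with h | h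
        · rw [← hpos]; exact h
        · omega
      · have hrz : r z = posOf z := by simp only [hr, if_neg hpos]
        rw [hrz] at hj
        rcases hzor with h | h
        · exact absurd h hpos
        · rcases posOf_negOf_disj z j with h' | h'
          · omega
          · rw [← h]; exact h'
    have hzeta : ∀ z ∈ Bad, z1 + repl z = natToInt x - natToInt (r z) := by
      intro z _
      rw [hz1, hrepl, hxm, he]
      ring
    have hzsign : ∀ z ∈ Bad, natToInt x - natToInt (r z) = z ∨
        natToInt x - natToInt (r z) = -z := by
      rintro z ⟨hzG, hzor⟩
      by_cases hpos : posOf z = x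
      · left
        have hrz : r z = negOf z := by simp only [hr, if_pos hpos]
        rw [hrz, ← hpos, natToInt_posOf_sub_negOf]
      · right
        rcases hzor with h | h
        · exact absurd h hpos
        · have hrz : r z = posOf z := by simp only [hr, if_neg hpos]
          rw [hrz, ← h, ← neg_sub, natToInt_posOf_sub_negOf]
    -- B' is finite
    have hBadfin : Bad.Finite := (graverB_finite A).subset (fun z hz => hz.1)
    have hB'fin : B'.Finite := by
      rw [hB']
      exact ((graverB_finite A).subset Set.diff_subset).union
        ((hBadfin.image repl).insert z1)
    -- B' consists of moves
    have hz1move : IsMove A z1 := by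
      show A.mulVec z1 = 0
      rw [hz1, Matrix.mulVec_sub, hy, ht', sub_self]
    have hreplmove : ∀ z ∈ Bad, IsMove A (repl z) := by
      intro z hz
      show A.mulVec (repl z) = 0
      rw [hrepl]
      simp only [Matrix.mulVec_sub, Matrix.mulVec_add]
      rw [hAr z hz, hxm, Matrix.mulVec_add, hy, ht', he]
      ring
    have hB'moves : ∀ z' ∈ B', IsMove A z' := by
      rintro z' (⟨hzG, _⟩ | hz')
      · exact hzG.1
      · rcases hz' with rfl | ⟨z, hz, rfl⟩
        · exact hz1move
        · exact hreplmove z hz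
    -- no element of B' has a part equal to x
    have hB'nopart : ∀ z' ∈ B', posOf z' ≠ x ∧ negOf z' ≠ x := by
      rintro z' (⟨hzG, hznb⟩ | hz')
      · constructor
        · intro hc; exact hznb ⟨hzG, Or.inl hc⟩
        · intro hc; exact hznb ⟨hzG, Or.inr hc⟩
      · rcases hz' with rfl | ⟨z, hz, rfl⟩
        · constructor
          · intro hc
            have h1 : posOf z1 i ≤ m i := by
              rw [hz1]; simp only [posOf, Pi.sub_apply, natToInt]; omega
            have h2 : m i < x i := by
              rw [hm]; simp only [Pi.sub_apply, Pi.single_eq_same]; omega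
            rw [hc] at h1; omega
          · intro hc
            have h1 : ∀ j, negOf z1 j ≤ y j := by
              intro j; rw [hz1]; simp only [negOf, Pi.sub_apply, natToInt]; omega
            rw [hc] at h1
            have : ∑ j, x j ≤ ∑ j, y j := Finset.sum_le_sum fun j _ => h1 j
            omega
        · constructor
          · intro hc
            have h1 : ∀ j, posOf (repl z) j ≤ y j + (Pi.single i 1 : Fin p → ℕ) j := by
              intro j
              rcases eq_or_ne j i with rfl | h
              · have he1 : e j = 1 := by simp [he, natToInt]
                simp only [hrepl, posOf, Pi.sub_apply, Pi.add_apply, natToInt, he1,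
                  Pi.single_eq_same]
                omega
              · have he0 : e j = 0 := by simp [he, natToInt, Pi.single_eq_of_ne h]
                simp only [hrepl, posOf, Pi.sub_apply, Pi.add_apply, natToInt, he0,
                  Pi.single_eq_of_ne h]
                omega
            rw [hc] at h1
            have hsum2 : ∑ j, (y j + (Pi.single i 1 : Fin p → ℕ) j) ≤ ∑ j, x j := by
              rw [Finset.sum_add_distrib]
              have : ∑ j, (Pi.single i 1 : Fin p → ℕ) j = 1 := by simp [Finset.sum_pi_single']
              omega
            have := eq_of_le_of_sum_le h1 hsum2
            apply hym
            funext j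
            have hj : x j = y j + (Pi.single i 1 : Fin p → ℕ) j := congrFun this j
            rw [hm]
            rcases eq_or_ne j i with rfl | h
            · simp only [Pi.sub_apply, Pi.single_eq_same] at hj ⊢; omega
            · simp only [Pi.sub_apply, Pi.single_eq_of_ne h] at hj ⊢; omega
          · intro hc
            have h1 : ∀ j, negOf (repl z) j ≤ r z j := by
              intro j
              rcases eq_or_ne j i with rfl | h
              · have he1 : e j = 1 := by simp [he, natToInt]
                simp only [hrepl, negOf, Pi.sub_apply, Pi.add_apply, natToInt, he1]
                omega
              · have he0 : e j = 0 := by simp [he, natToInt, Pi.single_eq_of_ne h]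
                simp only [hrepl, negOf, Pi.sub_apply, Pi.add_apply, natToInt, he0]
                omega
            rw [hc] at h1
            have h2 := h1 i
            have h3 := hsupp z hz i (by omega)
            omega
    -- simulation of Graver steps by B' steps
    have hsim : ∀ u v : Fin p → ℕ, MStep (GraverB A) u v → Accessible B' u v := by
      rintro u v ⟨z, hzG, hor⟩
      by_cases hbad : z ∈ Bad
      · have hζ : natToInt v = natToInt u + (natToInt x - natToInt (r z)) ∨
            natToInt v = natToInt u - (natToInt x - natToInt (r z)) := by
          rcases hzsign z hbad with hs | hs <;> rcases hor with h | h
          · left; rw [h, hs]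
          · right; rw [h, hs]
          · right; rw [h, hs]; ring
          · left; rw [h, hs]; ring
        have hzz : z1 + repl z = natToInt x - natToInt (r z) := hzeta z hbad
        have hreplB : repl z ∈ B' := Or.inr (Set.mem_insert_of_mem _ ⟨z, hbad, rfl⟩)
        have hz1B : z1 ∈ B' := Or.inr (Set.mem_insert _ _)
        rcases hζ with hv | hv
        · -- v = u + (x - r z) : go u → u + repl z → v
          have hnn : ∀ j, 0 ≤ natToInt u j + repl z j := by
            intro j
            have hvj := congrFun hv j
            have hvnn : (0:ℤ) ≤ natToInt v j := Int.ofNat_nonneg _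
            have hej' : e j = 0 ∨ e j = 1 := by
              rcases eq_or_ne j i with rfl | h
              · right; simp [he, natToInt]
              · left; simp [he, natToInt, Pi.single_eq_of_ne h]
            by_cases hrj : 0 < r z j
            · have hxj := hsupp z hbad j hrj
              simp only [Pi.add_apply, Pi.sub_apply, natToInt, hxj, hrepl] at hvj hvnn ⊢
              push_cast at *
              omega
            · have hrj0 : r z j = 0 := by omega
              simp only [Pi.add_apply, Pi.sub_apply, natToInt, hrj0, hrepl] at hvj hvnn ⊢
              push_cast at *
              omega
          set wmid : Fin p → ℕ := fun j => (natToInt u j + repl z j).toNat with hwmid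
          have hwmeq : natToInt wmid = natToInt u + repl z := by
            funext j
            have := hnn j
            simp only [natToInt, hwmid, Pi.add_apply] at this ⊢
            omega
          have hst1 : MStep B' u wmid := ⟨repl z, hreplB, Or.inl hwmeq⟩
          have hst2 : MStep B' wmid v := by
            refine ⟨z1, hz1B, Or.inl ?_⟩
            rw [hwmeq, hv, ← hzz]; ring
          exact Relation.ReflTransGen.head hst1 (Relation.ReflTransGen.single hst2)
        · -- v = u - (x - r z) : go u → u - z1 → v
          have hnn : ∀ j, 0 ≤ natToInt u j - z1 j := by
            intro j
            have hvj := congrFun hv j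
            have hvnn : (0:ℤ) ≤ natToInt v j := Int.ofNat_nonneg _
            have hmj : (m j : ℤ) ≤ (x j : ℤ) := by
              rw [hm]
              rcases eq_or_ne j i with rfl | h
              · simp only [Pi.sub_apply, Pi.single_eq_same]; push_cast; omega
              · simp only [Pi.sub_apply, Pi.single_eq_of_ne h]; push_cast; omega
            by_cases hrj : 0 < r z j
            · have hxj := hsupp z hbad j hrj
              have hmj0 : m j = 0 := by
                rw [hm]; simp only [Pi.sub_apply]; omega
              simp only [Pi.sub_apply, natToInt, hz1, hmj0] at hvj hvnn ⊢
              push_cast at *; omega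
            · have hrj0 : r z j = 0 := by omega
              simp only [Pi.sub_apply, natToInt, hz1, hrj0] at hvj hvnn hmj ⊢
              push_cast at *; omega
          set wmid : Fin p → ℕ := fun j => (natToInt u j - z1 j).toNat with hwmid
          have hwmeq : natToInt wmid = natToInt u - z1 := by
            funext j
            have := hnn j
            simp only [natToInt, hwmid, Pi.sub_apply] at this ⊢
            omega
          have hst1 : MStep B' u wmid := ⟨z1, hz1B, Or.inr hwmeq⟩
          have hst2 : MStep B' wmid v := by
            refine ⟨repl z, hreplB, Or.inr ?_⟩
            rw [hwmeq, hv, ← hzz]; ring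
          exact Relation.ReflTransGen.head hst1 (Relation.ReflTransGen.single hst2)
      · exact Relation.ReflTransGen.single ⟨z, Or.inl ⟨hzG, hbad⟩, hor⟩
    have hlift : ∀ a b : Fin p → ℕ, Accessible (GraverB A) a b → Accessible B' a b := by
      intro a b hab
      induction hab with
      | refl => exact Relation.ReflTransGen.refl
      | tail h1 h2 ih => exact Relation.ReflTransGen.trans ih (hsim _ _ h2)
    have hB'markov : IsMarkovBasis A B' := by
      refine ⟨hB'fin, hB'moves, fun t a ha b hb => hlift a b ?_⟩
      exact graverB_connect A _ a b le_rfl (by rw [ha, hb])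
    obtain ⟨z', hz'B, hor'⟩ := hind B' hB'markov
    rcases hor' with h | h
    · exact (hB'nopart z' hz'B).1 h
    · exact (hB'nopart z' hz'B).2 h

end Indisp


/-- `x` is an indispensable monomial iff `x` is a minimal multi-element. -/
theorem indispensableMonomial_iff_minimalMultiElement
    {p d : ℕ} (hp : 0 < p) (hd : 0 < d)
    (A : Matrix (Fin d) (Fin p) ℤ) (hA : IsHomogeneousMatrix A) (x : Fin p → ℕ) :
    IsIndispensableMonomial A x ↔ IsMinimalMultiElement A x := by
  exact ⟨fun h => indisp_to_mme A hA h, fun h => mme_to_indisp A h⟩
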